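/- Let π be a Poisson tensor on ℝ^N that does not depend on the variable x_p for some fixed 1 ≤ p ≤ N, and let c be a linear Casimir function for π. Then the 2N×2N antisymmetric matrix field on ℝ^{2N} given in blocks by Π^{xx}(x,y) = 0, Π^{xy}(x,y) = π(x) + c(y)·E_pp, Π^{yx}(x,y) = π(x) − c(y)·E_pp, Π^{yy}(x,y) = ∑_{s=1}^N (∂π/∂x_s)(x) y_s is a Poisson tensor on ℝ^{2N} (denoted Π_{TM,c(y)}). -/

import Mathlib

open scoped ContDiff

/-- Partial derivative `∂f/∂z_s` at `z`, for functions on `ℝ^ι`. -/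
noncomputable def pd {ι : Type} [Fintype ι] [DecidableEq ι]
    (s : ι) (f : (ι → ℝ) → ℝ) (x : ι → ℝ) : ℝ :=
  fderiv ℝ f x (Pi.single s 1)

/-- A Poisson tensor on `ℝ^ι`: a smooth antisymmetric matrix field satisfying the
Jacobi condition. -/
def IsPoissonTensor {ι : Type} [Fintype ι] [DecidableEq ι]
    (π : (ι → ℝ) → Matrix ι ι ℝ) : Prop :=
  (∀ i j, ContDiff ℝ ∞ fun x => π x i j) ∧
  (∀ x i j, π x j i = - π x i j) ∧
  (∀ x i j k, ∑ s, (pd s (fun y => π y i j) x * π x s k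
      + pd s (fun y => π y k i) x * π x s j
      + pd s (fun y => π y j k) x * π x s i) = 0)

/-- `c` is a (smooth) Casimir function for `π`. -/
def IsCasimir {ι : Type} [Fintype ι] [DecidableEq ι]
    (π : (ι → ℝ) → Matrix ι ι ℝ) (c : (ι → ℝ) → ℝ) : Prop :=
  ContDiff ℝ ∞ c ∧ ∀ x j, ∑ s, pd s c x * π x s j = 0

/-- The matrix of partial derivatives `(∂π_{ij}/∂x_s)(x)`. -/
noncomputable def pdMat {N : ℕ} (s : Fin N)
    (π : (Fin N → ℝ) → Matrix (Fin N) (Fin N) ℝ) (x : Fin N → ℝ) :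
    Matrix (Fin N) (Fin N) ℝ :=
  Matrix.of fun i j => pd s (fun y => π y i j) x

/-- The `x`-part of a point `z = (x,y) ∈ ℝ^{2N}`. -/
def Xc {N : ℕ} (z : (Fin N ⊕ Fin N) → ℝ) : Fin N → ℝ := fun i => z (Sum.inl i)

/-- The `y`-part of a point `z = (x,y) ∈ ℝ^{2N}`. -/
def Yc {N : ℕ} (z : (Fin N ⊕ Fin N) → ℝ) : Fin N → ℝ := fun i => z (Sum.inr i)

/-- A linear function `c(x) = ∑ s, a_s x_s`. -/
def IsLinearFun {N : ℕ} (c : (Fin N → ℝ) → ℝ) : Prop :=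
  ∃ a : Fin N → ℝ, ∀ x, c x = ∑ s, a s * x s

/-! ### Auxiliary `pd` calculus -/

section pdCalc
variable {ι : Type} [Fintype ι] [DecidableEq ι]

lemma pd_congr_fun {f g : (ι → ℝ) → ℝ} (h : ∀ x, f x = g x) (s : ι) (x : ι → ℝ) :
    pd s f x = pd s g x := by rw [show f = g from funext h]

lemma pd_const (s : ι) (r : ℝ) (x : ι → ℝ) : pd s (fun _ => r) x = 0 := by
  simp [pd]

lemma pd_zero_fun {f : (ι → ℝ) → ℝ} (h : ∀ x, f x = 0) (s : ι) (x : ι → ℝ) :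
    pd s f x = 0 := by rw [pd_congr_fun h]; exact pd_const s 0 x

lemma pd_add {f g : (ι → ℝ) → ℝ} {x : ι → ℝ} (hf : DifferentiableAt ℝ f x)
    (hg : DifferentiableAt ℝ g x) (s : ι) :
    pd s (fun x => f x + g x) x = pd s f x + pd s g x := by
  simp [pd, fderiv_fun_add hf hg]

lemma pd_neg {f : (ι → ℝ) → ℝ} {x : ι → ℝ} (s : ι) :
    pd s (fun x => -f x) x = - pd s f x := by
  simp [pd, fderiv_neg]

lemma pd_sub {f g : (ι → ℝ) → ℝ} {x : ι → ℝ} (hf : DifferentiableAt ℝ f x)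
    (hg : DifferentiableAt ℝ g x) (s : ι) :
    pd s (fun x => f x - g x) x = pd s f x - pd s g x := by
  simp [pd, fderiv_fun_sub hf hg]

lemma pd_mul {f g : (ι → ℝ) → ℝ} {x : ι → ℝ} (hf : DifferentiableAt ℝ f x)
    (hg : DifferentiableAt ℝ g x) (s : ι) :
    pd s (fun x => f x * g x) x = pd s f x * g x + f x * pd s g x := by
  simp [pd, fderiv_fun_mul hf hg]; ring

lemma pd_const_mul {f : (ι → ℝ) → ℝ} {x : ι → ℝ} (hf : DifferentiableAt ℝ f x)
    (r : ℝ) (s : ι) :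
    pd s (fun x => r * f x) x = r * pd s f x := by
  simp [pd, fderiv_const_mul hf r]

lemma pd_mul_const {f : (ι → ℝ) → ℝ} {x : ι → ℝ} (hf : DifferentiableAt ℝ f x)
    (r : ℝ) (s : ι) :
    pd s (fun x => f x * r) x = pd s f x * r := by
  rw [pd_congr_fun (g := fun x => r * f x) (fun x => mul_comm _ _), pd_const_mul hf]
  ring

lemma pd_sum {α : Type*} {A : Finset α} {f : α → (ι → ℝ) → ℝ} {x : ι → ℝ}
    (hf : ∀ a ∈ A, DifferentiableAt ℝ (f a) x) (s : ι) :
    pd s (fun x => ∑ a ∈ A, f a x) x = ∑ a ∈ A, pd s (f a) x := by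
  simp [pd, fderiv_fun_sum hf]

lemma pd_coord (s t : ι) (x : ι → ℝ) :
    pd s (fun x : ι → ℝ => x t) x = if t = s then 1 else 0 := by
  have h : fderiv ℝ (fun x : ι → ℝ => x t) x = ContinuousLinearMap.proj t :=
    (ContinuousLinearMap.proj (R := ℝ) (φ := fun _ : ι => ℝ) t).fderiv
  simp [pd, h, Pi.single_apply]

lemma contDiff_pd {f : (ι → ℝ) → ℝ} (hf : ContDiff ℝ ∞ f) (s : ι) :
    ContDiff ℝ ∞ (fun x => pd s f x) := by
  exact (hf.fderiv_right (by simp)).clm_apply contDiff_const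

lemma pd_comm {f : (ι → ℝ) → ℝ} (hf : ContDiff ℝ ∞ f) (u t : ι) (x : ι → ℝ) :
    pd u (fun x => pd t f x) x = pd t (fun x => pd u f x) x := by
  have hdf : Differentiable ℝ f := hf.differentiable (by simp)
  have hf' : ContDiff ℝ ∞ (fderiv ℝ f) := hf.fderiv_right (by simp)
  have hd' : DifferentiableAt ℝ (fderiv ℝ f) x :=
    (hf'.differentiable (by simp)).differentiableAt
  have hsymm := second_derivative_symmetric (f' := fderiv ℝ f)
      (f'' := fderiv ℝ (fderiv ℝ f) x) (fun y => (hdf y).hasFDerivAt)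
      hd'.hasFDerivAt
  have key : ∀ a b : ι, pd a (fun x => pd b f x) x
      = fderiv ℝ (fderiv ℝ f) x (Pi.single a 1) (Pi.single b 1) := by
    intro a b
    unfold pd
    rw [fderiv_clm_apply hd' (differentiableAt_const _)]
    simp
  rw [key, key, hsymm]

end pdCalc

/-! ### Projections to the two factors of `ℝ^{2N}` -/

noncomputable def XcL (N : ℕ) : ((Fin N ⊕ Fin N) → ℝ) →L[ℝ] (Fin N → ℝ) :=
  ContinuousLinearMap.pi fun i => ContinuousLinearMap.proj (Sum.inl i)
noncomputable def YcL (N : ℕ) : ((Fin N ⊕ Fin N) → ℝ) →L[ℝ] (Fin N → ℝ) :=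
  ContinuousLinearMap.pi fun i => ContinuousLinearMap.proj (Sum.inr i)

lemma contDiff_comp_Xc {N : ℕ} {f : (Fin N → ℝ) → ℝ} (hf : ContDiff ℝ ∞ f) :
    ContDiff ℝ ∞ (fun z : (Fin N ⊕ Fin N) → ℝ => f (Xc z)) :=
  hf.comp (XcL N).contDiff

lemma contDiff_comp_Yc {N : ℕ} {f : (Fin N → ℝ) → ℝ} (hf : ContDiff ℝ ∞ f) :
    ContDiff ℝ ∞ (fun z : (Fin N ⊕ Fin N) → ℝ => f (Yc z)) :=
  hf.comp (YcL N).contDiff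

lemma XcL_single_inl {N : ℕ} (t : Fin N) :
    XcL N (Pi.single (Sum.inl t) 1) = Pi.single t 1 := by
  funext i; simp [XcL, Pi.single_apply]

lemma XcL_single_inr {N : ℕ} (t : Fin N) :
    XcL N (Pi.single (Sum.inr t) 1) = 0 := by
  funext i; simp [XcL, Pi.single_apply]

lemma YcL_single_inr {N : ℕ} (t : Fin N) :
    YcL N (Pi.single (Sum.inr t) 1) = Pi.single t 1 := by
  funext i; simp [YcL, Pi.single_apply]

lemma YcL_single_inl {N : ℕ} (t : Fin N) :
    YcL N (Pi.single (Sum.inl t) 1) = 0 := by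
  funext i; simp [YcL, Pi.single_apply]

lemma pd_inl_comp_Xc {N : ℕ} {f : (Fin N → ℝ) → ℝ} {z : (Fin N ⊕ Fin N) → ℝ}
    (hf : DifferentiableAt ℝ f (Xc z)) (t : Fin N) :
    pd (Sum.inl t) (fun z => f (Xc z)) z = pd t f (Xc z) := by
  unfold pd
  have h1 : (fun z : (Fin N ⊕ Fin N) → ℝ => f (Xc z)) = f ∘ (Xc (N := N)) := rfl
  have hd : DifferentiableAt ℝ (Xc (N := N)) z := (XcL N).differentiableAt
  have h2 : fderiv ℝ (Xc (N := N)) z = XcL N := (XcL N).fderiv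
  rw [h1, fderiv_comp z hf hd, h2]
  simp [XcL_single_inl]

lemma pd_inr_comp_Xc {N : ℕ} {f : (Fin N → ℝ) → ℝ} {z : (Fin N ⊕ Fin N) → ℝ}
    (hf : DifferentiableAt ℝ f (Xc z)) (t : Fin N) :
    pd (Sum.inr t) (fun z => f (Xc z)) z = 0 := by
  unfold pd
  have h1 : (fun z : (Fin N ⊕ Fin N) → ℝ => f (Xc z)) = f ∘ (Xc (N := N)) := rfl
  have hd : DifferentiableAt ℝ (Xc (N := N)) z := (XcL N).differentiableAt
  have h2 : fderiv ℝ (Xc (N := N)) z = XcL N := (XcL N).fderiv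
  rw [h1, fderiv_comp z hf hd, h2]
  simp [XcL_single_inr]

lemma pd_inr_comp_Yc {N : ℕ} {f : (Fin N → ℝ) → ℝ} {z : (Fin N ⊕ Fin N) → ℝ}
    (hf : DifferentiableAt ℝ f (Yc z)) (t : Fin N) :
    pd (Sum.inr t) (fun z => f (Yc z)) z = pd t f (Yc z) := by
  unfold pd
  have h1 : (fun z : (Fin N ⊕ Fin N) → ℝ => f (Yc z)) = f ∘ (Yc (N := N)) := rfl
  have hd : DifferentiableAt ℝ (Yc (N := N)) z := (YcL N).differentiableAt
  have h2 : fderiv ℝ (Yc (N := N)) z = YcL N := (YcL N).fderiv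
  rw [h1, fderiv_comp z hf hd, h2]
  simp [YcL_single_inr]

lemma pd_inl_comp_Yc {N : ℕ} {f : (Fin N → ℝ) → ℝ} {z : (Fin N ⊕ Fin N) → ℝ}
    (hf : DifferentiableAt ℝ f (Yc z)) (t : Fin N) :
    pd (Sum.inl t) (fun z => f (Yc z)) z = 0 := by
  unfold pd
  have h1 : (fun z : (Fin N ⊕ Fin N) → ℝ => f (Yc z)) = f ∘ (Yc (N := N)) := rfl
  have hd : DifferentiableAt ℝ (Yc (N := N)) z := (YcL N).differentiableAt
  have h2 : fderiv ℝ (Yc (N := N)) z = YcL N := (YcL N).fderiv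
  rw [h1, fderiv_comp z hf hd, h2]
  simp [YcL_single_inl]

lemma pd_Yc_coord {N : ℕ} (s : Fin N ⊕ Fin N) (u : Fin N) (z : (Fin N ⊕ Fin N) → ℝ) :
    pd s (fun z => Yc z u) z = if Sum.inr u = s then 1 else 0 := by
  unfold Yc
  exact pd_coord s (Sum.inr u) z

/-! ### Sum-splitting helpers -/

lemma split2 {ι : Type} [Fintype ι] (A B : ℝ) (f g : ι → ℝ) :
    ∑ t, (A * f t + B * g t) = A * (∑ t, f t) + B * (∑ t, g t) := by
  simp [Finset.sum_add_distrib, Finset.mul_sum]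

lemma split4 {ι : Type} [Fintype ι] (A B C : ℝ) (f1 f2 f3 f4 : ι → ℝ) :
    ∑ t, (f1 t + A * f2 t + B * f3 t + C * f4 t)
      = (∑ t, f1 t) + A * (∑ t, f2 t) + B * (∑ t, f3 t) + C * (∑ t, f4 t) := by
  simp [Finset.sum_add_distrib, Finset.mul_sum]

lemma split6 {ι : Type} [Fintype ι] (A B C D E : ℝ) (f1 f2 f3 f4 f5 f6 : ι → ℝ) :
    ∑ t, (f1 t + A * f2 t + B * f3 t - C * f4 t + D * f5 t - E * f6 t)
      = (∑ t, f1 t) + A * (∑ t, f2 t) + B * (∑ t, f3 t) - C * (∑ t, f4 t)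
        + D * (∑ t, f5 t) - E * (∑ t, f6 t) := by
  simp [Finset.sum_add_distrib, Finset.sum_sub_distrib, Finset.mul_sum]

/-- the deformed tangent lift `Π_{TM,c(y)}` (with a linear Casimir `c`)
is a Poisson tensor on `ℝ^{2N}`. -/
theorem stmt4 {N : ℕ} (hN : 1 ≤ N)
    (π : (Fin N → ℝ) → Matrix (Fin N) (Fin N) ℝ) (hπ : IsPoissonTensor π)
    (p : Fin N) (hp : ∀ x i j, pd p (fun y => π y i j) x = 0)
    (c : (Fin N → ℝ) → ℝ) (hc : IsCasimir π c) (hclin : IsLinearFun c) :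
    IsPoissonTensor (fun z : (Fin N ⊕ Fin N) → ℝ =>
      Matrix.fromBlocks
        0
        (π (Xc z) + c (Yc z) • Matrix.single p p (1 : ℝ))
        (π (Xc z) - c (Yc z) • Matrix.single p p (1 : ℝ))
        (∑ s, Yc z s • pdMat s π (Xc z))) := by
  obtain ⟨hsm, hanti, hjac⟩ := hπ
  obtain ⟨hcsm, hcas⟩ := hc
  obtain ⟨a, ha⟩ := hclin
  -- basic differentiability facts
  have dπ : ∀ i j, Differentiable ℝ (fun y => π y i j) :=
    fun i j => (hsm i j).differentiable (by simp)
  have spd : ∀ (u : Fin N) i j, ContDiff ℝ ∞ (fun x => pd u (fun y => π y i j) x) :=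
    fun u i j => contDiff_pd (hsm i j) u
  have dpd : ∀ (u : Fin N) i j, Differentiable ℝ (fun x => pd u (fun y => π y i j) x) :=
    fun u i j => (spd u i j).differentiable (by simp)
  have hcd : Differentiable ℝ c := hcsm.differentiable (by simp)
  have sX : ∀ i j, ContDiff ℝ ∞ (fun z : (Fin N ⊕ Fin N) → ℝ => π (Xc z) i j) :=
    fun i j => contDiff_comp_Xc (hsm i j)
  have dπX : ∀ i j, Differentiable ℝ (fun z : (Fin N ⊕ Fin N) → ℝ => π (Xc z) i j) :=
    fun i j => (sX i j).differentiable (by simp)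
  have spdX : ∀ (u : Fin N) i j,
      ContDiff ℝ ∞ (fun z : (Fin N ⊕ Fin N) → ℝ => pd u (fun y => π y i j) (Xc z)) :=
    fun u i j => contDiff_comp_Xc (spd u i j)
  have dpdX : ∀ (u : Fin N) i j,
      Differentiable ℝ (fun z : (Fin N ⊕ Fin N) → ℝ => pd u (fun y => π y i j) (Xc z)) :=
    fun u i j => (spdX u i j).differentiable (by simp)
  have scY : ContDiff ℝ ∞ (fun z : (Fin N ⊕ Fin N) → ℝ => c (Yc z)) := contDiff_comp_Yc hcsm
  have dcY : Differentiable ℝ (fun z : (Fin N ⊕ Fin N) → ℝ => c (Yc z)) :=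
    scY.differentiable (by simp)
  have sY : ∀ u : Fin N, ContDiff ℝ ∞ (fun z : (Fin N ⊕ Fin N) → ℝ => Yc z u) := by
    intro u
    exact (ContinuousLinearMap.proj (R := ℝ) (φ := fun _ : Fin N ⊕ Fin N => ℝ)
      (Sum.inr u)).contDiff
  have dY : ∀ u : Fin N, Differentiable ℝ (fun z : (Fin N ⊕ Fin N) → ℝ => Yc z u) :=
    fun u => (sY u).differentiable (by simp)
  have dcoord : ∀ (s : Fin N) (x : Fin N → ℝ), DifferentiableAt ℝ (fun v : Fin N → ℝ => v s) x :=
    fun s x => (ContinuousLinearMap.proj (R := ℝ) (φ := fun _ : Fin N => ℝ) s).differentiableAt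
  -- the linear Casimir facts
  have hac : ∀ (x : Fin N → ℝ) (t : Fin N), pd t c x = a t := by
    intro x t
    rw [pd_congr_fun ha,
      pd_sum (fun s _ => (differentiableAt_const (a s)).fun_mul (dcoord s x))]
    calc ∑ s, pd t (fun x => a s * x s) x
        = ∑ s, a s * (if s = t then 1 else 0) := by
          refine Finset.sum_congr rfl fun s _ => ?_
          rw [pd_const_mul (dcoord s x) (a s), pd_coord]
      _ = a t := by simp
  have hcas' : ∀ (x : Fin N → ℝ) (k : Fin N), ∑ t, a t * π x t k = 0 := by
    intro x k
    simpa only [hac] using hcas x k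
  have hdcas : ∀ (x : Fin N → ℝ) (u k : Fin N),
      ∑ t, a t * pd u (fun y => π y t k) x = 0 := by
    intro x u k
    calc ∑ t, a t * pd u (fun y => π y t k) x
        = ∑ t, pd u (fun x => a t * π x t k) x :=
          Finset.sum_congr rfl fun t _ => (pd_const_mul ((dπ t k) x) (a t) u).symm
      _ = pd u (fun x => ∑ t, a t * π x t k) x :=
          (pd_sum (fun t _ => (differentiableAt_const (a t)).mul ((dπ t k) x)) u).symm
      _ = 0 := pd_zero_fun (fun x' => hcas' x' k) u x
  -- hp-derived facts
  have hpp : ∀ (x : Fin N → ℝ) (u : Fin N) (i j : Fin N),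
      pd p (fun x => pd u (fun y => π y i j) x) x = 0 := by
    intro x u i j
    rw [pd_comm (hsm i j)]
    exact pd_zero_fun (fun x' => hp x' i j) u x
  -- differentiated Jacobi identity
  have dA : ∀ (t i j k : Fin N) (x : Fin N → ℝ),
      DifferentiableAt ℝ (fun x => pd t (fun y => π y i j) x * π x t k) x :=
    fun t i j k x => ((dpd t i j) x).mul ((dπ t k) x)
  have hdjac : ∀ (x : Fin N → ℝ) (u i j k : Fin N),
      ∑ t, (pd t (fun x => pd u (fun y => π y i j) x) x * π x t k
          + pd t (fun y => π y i j) x * pd u (fun y => π y t k) x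
          + pd t (fun x => pd u (fun y => π y k i) x) x * π x t j
          + pd t (fun y => π y k i) x * pd u (fun y => π y t j) x
          + pd t (fun x => pd u (fun y => π y j k) x) x * π x t i
          + pd t (fun y => π y j k) x * pd u (fun y => π y t i) x) = 0 := by
    intro x u i j k
    calc ∑ t, (pd t (fun x => pd u (fun y => π y i j) x) x * π x t k
          + pd t (fun y => π y i j) x * pd u (fun y => π y t k) x
          + pd t (fun x => pd u (fun y => π y k i) x) x * π x t j
          + pd t (fun y => π y k i) x * pd u (fun y => π y t j) x
          + pd t (fun x => pd u (fun y => π y j k) x) x * π x t i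
          + pd t (fun y => π y j k) x * pd u (fun y => π y t i) x)
        = ∑ t, pd u (fun x => pd t (fun y => π y i j) x * π x t k
            + pd t (fun y => π y k i) x * π x t j
            + pd t (fun y => π y j k) x * π x t i) x := by
          refine Finset.sum_congr rfl fun t _ => ?_
          rw [pd_add ((dA t i j k x).fun_add (dA t k i j x)) (dA t j k i x),
            pd_add (dA t i j k x) (dA t k i j x),
            pd_mul ((dpd t i j) x) ((dπ t k) x),
            pd_mul ((dpd t k i) x) ((dπ t j) x),
            pd_mul ((dpd t j k) x) ((dπ t i) x),
            pd_comm (hsm i j), pd_comm (hsm k i), pd_comm (hsm j k)]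
          ring
      _ = pd u (fun x => ∑ t, (pd t (fun y => π y i j) x * π x t k
            + pd t (fun y => π y k i) x * π x t j
            + pd t (fun y => π y j k) x * π x t i)) x :=
          (pd_sum (fun t _ => ((dA t i j k x).fun_add (dA t k i j x)).fun_add (dA t j k i x)) u).symm
      _ = 0 := pd_zero_fun (fun x' => hjac x' i j k) u x
  -- the std basis matrix as a product of indicators
  have hE : ∀ i j : Fin N, Matrix.single p p (1 : ℝ) i j
      = (if p = i then (1:ℝ) else 0) * (if p = j then (1:ℝ) else 0) := by
    intro i j
    by_cases h1 : p = i <;> by_cases h2 : p = j <;>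
      simp [Matrix.single, h1, h2]
  -- collapse of indicator sums
  have hcol : ∀ F : Fin N → ℝ, ∑ t, (if p = t then (1:ℝ) else 0) * F t = F p := by
    intro F
    simp [ite_mul]
  -- pd computations for the entries of the big tensor
  have Pll : ∀ (s : Fin N ⊕ Fin N) (z : (Fin N ⊕ Fin N) → ℝ),
      pd s (fun _ : (Fin N ⊕ Fin N) → ℝ => (0:ℝ)) z = 0 := fun s z => pd_const s 0 z
  have Plr_l : ∀ (z : (Fin N ⊕ Fin N) → ℝ) (t i j : Fin N) (r : ℝ),
      pd (Sum.inl t) (fun z => π (Xc z) i j + c (Yc z) * r) z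
        = pd t (fun y => π y i j) (Xc z) := by
    intro z t i j r
    rw [pd_add ((dπX i j) z) ((dcY z).fun_mul (differentiableAt_const r)),
      pd_inl_comp_Xc ((dπ i j) (Xc z)), pd_mul_const (dcY z) r,
      pd_inl_comp_Yc (hcd (Yc z))]
    ring
  have Plr_r : ∀ (z : (Fin N ⊕ Fin N) → ℝ) (t i j : Fin N) (r : ℝ),
      pd (Sum.inr t) (fun z => π (Xc z) i j + c (Yc z) * r) z = a t * r := by
    intro z t i j r
    rw [pd_add ((dπX i j) z) ((dcY z).fun_mul (differentiableAt_const r)),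
      pd_inr_comp_Xc ((dπ i j) (Xc z)), pd_mul_const (dcY z) r,
      pd_inr_comp_Yc (hcd (Yc z)), hac]
    ring
  have Prl_l : ∀ (z : (Fin N ⊕ Fin N) → ℝ) (t i j : Fin N) (r : ℝ),
      pd (Sum.inl t) (fun z => π (Xc z) i j - c (Yc z) * r) z
        = pd t (fun y => π y i j) (Xc z) := by
    intro z t i j r
    rw [pd_sub ((dπX i j) z) ((dcY z).fun_mul (differentiableAt_const r)),
      pd_inl_comp_Xc ((dπ i j) (Xc z)), pd_mul_const (dcY z) r,
      pd_inl_comp_Yc (hcd (Yc z))]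
    ring
  have Prl_r : ∀ (z : (Fin N ⊕ Fin N) → ℝ) (t i j : Fin N) (r : ℝ),
      pd (Sum.inr t) (fun z => π (Xc z) i j - c (Yc z) * r) z = -(a t * r) := by
    intro z t i j r
    rw [pd_sub ((dπX i j) z) ((dcY z).fun_mul (differentiableAt_const r)),
      pd_inr_comp_Xc ((dπ i j) (Xc z)), pd_mul_const (dcY z) r,
      pd_inr_comp_Yc (hcd (Yc z)), hac]
    ring
  have Prr_l : ∀ (z : (Fin N ⊕ Fin N) → ℝ) (t i j : Fin N),
      pd (Sum.inl t) (fun z => ∑ u, Yc z u * pd u (fun y => π y i j) (Xc z)) z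
        = ∑ u, Yc z u * pd t (fun x => pd u (fun y => π y i j) x) (Xc z) := by
    intro z t i j
    rw [pd_sum (fun u _ => ((dY u) z).fun_mul ((dpdX u i j) z))]
    refine Finset.sum_congr rfl fun u _ => ?_
    rw [pd_mul ((dY u) z) ((dpdX u i j) z), pd_Yc_coord,
      pd_inl_comp_Xc ((dpd u i j) (Xc z))]
    simp
  have Prr_r : ∀ (z : (Fin N ⊕ Fin N) → ℝ) (t i j : Fin N),
      pd (Sum.inr t) (fun z => ∑ u, Yc z u * pd u (fun y => π y i j) (Xc z)) z
        = pd t (fun y => π y i j) (Xc z) := by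
    intro z t i j
    rw [pd_sum (fun u _ => ((dY u) z).fun_mul ((dpdX u i j) z))]
    calc ∑ u, pd (Sum.inr t) (fun z => Yc z u * pd u (fun y => π y i j) (Xc z)) z
        = ∑ u, (if u = t then (1:ℝ) else 0) * pd u (fun y => π y i j) (Xc z) := by
          refine Finset.sum_congr rfl fun u _ => ?_
          rw [pd_mul ((dY u) z) ((dpdX u i j) z), pd_Yc_coord,
            pd_inr_comp_Xc ((dpd u i j) (Xc z))]
          simp [Sum.inr.injEq]
      _ = pd t (fun y => π y i j) (Xc z) := by
          simp [ite_mul]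
  refine ⟨?_, ?_, ?_⟩
  · -- smoothness
    rintro (i|i) (j|j) <;>
      simp only [Matrix.fromBlocks_apply₁₁, Matrix.fromBlocks_apply₁₂,
        Matrix.fromBlocks_apply₂₁, Matrix.fromBlocks_apply₂₂, Matrix.add_apply,
        Matrix.sub_apply, Matrix.smul_apply, Matrix.zero_apply, Matrix.sum_apply,
        pdMat, Matrix.of_apply, smul_eq_mul, hE]
    · exact contDiff_const
    · exact (sX i j).add (scY.mul contDiff_const)
    · exact (sX i j).sub (scY.mul contDiff_const)
    · exact ContDiff.sum fun u _ => (sY u).mul (spdX u i j)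
  · -- antisymmetry
    rintro z (i|i) (j|j) <;>
      simp only [Matrix.fromBlocks_apply₁₁, Matrix.fromBlocks_apply₁₂,
        Matrix.fromBlocks_apply₂₁, Matrix.fromBlocks_apply₂₂, Matrix.add_apply,
        Matrix.sub_apply, Matrix.smul_apply, Matrix.zero_apply, Matrix.sum_apply,
        pdMat, Matrix.of_apply, smul_eq_mul, hE]
    · simp
    · rw [hanti (Xc z) i j]; ring
    · rw [hanti (Xc z) i j]; ring
    · rw [← Finset.sum_neg_distrib]
      refine Finset.sum_congr rfl fun u _ => ?_
      rw [pd_congr_fun (fun x => hanti x i j) u (Xc z), pd_neg]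
      ring
  · -- Jacobi identity
    set T : ((Fin N ⊕ Fin N) → ℝ) → Matrix (Fin N ⊕ Fin N) (Fin N ⊕ Fin N) ℝ :=
      (fun z : (Fin N ⊕ Fin N) → ℝ =>
        Matrix.fromBlocks
          0
          (π (Xc z) + c (Yc z) • Matrix.single p p (1 : ℝ))
          (π (Xc z) - c (Yc z) • Matrix.single p p (1 : ℝ))
          (∑ s, Yc z s • pdMat s π (Xc z))) with hT
    intro z i' j' k'
    have hdp : ∀ i j : Fin N,
        ∑ t, (if p = t then (1:ℝ) else 0) * pd t (fun y => π y i j) (Xc z) = 0 := by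
      intro i j; rw [hcol]; exact hp (Xc z) i j
    have hDc : ∀ k : Fin N,
        ∑ t, a t * (∑ u, Yc z u * pd u (fun y => π y t k) (Xc z)) = 0 := by
      intro k
      calc ∑ t, a t * (∑ u, Yc z u * pd u (fun y => π y t k) (Xc z))
          = ∑ t, ∑ u, Yc z u * (a t * pd u (fun y => π y t k) (Xc z)) := by
            refine Finset.sum_congr rfl fun t _ => ?_
            rw [Finset.mul_sum]
            exact Finset.sum_congr rfl fun u _ => by ring
        _ = ∑ u, ∑ t, Yc z u * (a t * pd u (fun y => π y t k) (Xc z)) := Finset.sum_comm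
        _ = 0 := Finset.sum_eq_zero fun u _ => by
            rw [← Finset.mul_sum, hdcas (Xc z) u k, mul_zero]
    have rot : ∀ i' j' k' : Fin N ⊕ Fin N,
        ∑ s, (pd s (fun y => T y i' j') z * T z s k'
            + pd s (fun y => T y k' i') z * T z s j'
            + pd s (fun y => T y j' k') z * T z s i')
        = ∑ s, (pd s (fun y => T y j' k') z * T z s i'
            + pd s (fun y => T y i' j') z * T z s k'
            + pd s (fun y => T y k' i') z * T z s j') :=
      fun i' j' k' => Finset.sum_congr rfl fun s _ => by ring
    have hJ0 : ∀ i j k : Fin N,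
        ∑ s, (pd s (fun y => T y (Sum.inl i) (Sum.inl j)) z * T z s (Sum.inl k)
            + pd s (fun y => T y (Sum.inl k) (Sum.inl i)) z * T z s (Sum.inl j)
            + pd s (fun y => T y (Sum.inl j) (Sum.inl k)) z * T z s (Sum.inl i)) = 0 := by
      intro i j k
      rw [hT, Fintype.sum_sum_type]
      simp only [Matrix.fromBlocks_apply₁₁, Matrix.fromBlocks_apply₁₂,
        Matrix.fromBlocks_apply₂₁, Matrix.fromBlocks_apply₂₂, Matrix.add_apply,
        Matrix.sub_apply, Matrix.smul_apply, Matrix.zero_apply, Matrix.sum_apply,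
        pdMat, Matrix.of_apply, smul_eq_mul, hE, Pll, Plr_l, Plr_r, Prl_l, Prl_r,
        Prr_l, Prr_r]
      simp
    have hJ1 : ∀ i j k : Fin N,
        ∑ s, (pd s (fun y => T y (Sum.inl i) (Sum.inl j)) z * T z s (Sum.inr k)
            + pd s (fun y => T y (Sum.inr k) (Sum.inl i)) z * T z s (Sum.inl j)
            + pd s (fun y => T y (Sum.inl j) (Sum.inr k)) z * T z s (Sum.inl i)) = 0 := by
      intro i j k
      rw [hT, Fintype.sum_sum_type]
      simp only [Matrix.fromBlocks_apply₁₁, Matrix.fromBlocks_apply₁₂,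
        Matrix.fromBlocks_apply₂₁, Matrix.fromBlocks_apply₂₂, Matrix.add_apply,
        Matrix.sub_apply, Matrix.smul_apply, Matrix.zero_apply, Matrix.sum_apply,
        pdMat, Matrix.of_apply, smul_eq_mul, hE, Pll, Plr_l, Plr_r, Prl_l, Prl_r,
        Prr_l, Prr_r]
      calc _ = ∑ t, ((-((if p = k then (1:ℝ) else 0) * (if p = i then (1:ℝ) else 0)))
              * (a t * π (Xc z) t j)
            + ((if p = j then (1:ℝ) else 0) * (if p = k then (1:ℝ) else 0))
              * (a t * π (Xc z) t i)) := by
            rw [← Finset.sum_add_distrib]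
            exact Finset.sum_congr rfl fun t _ => by ring
        _ = 0 := by
            rw [split2]
            have e1 : ∑ t, a t * π (Xc z) t j = 0 := hcas' (Xc z) j
            have e2 : ∑ t, a t * π (Xc z) t i = 0 := hcas' (Xc z) i
            rw [e1, e2]
            ring
    have hJ2 : ∀ i j k : Fin N,
        ∑ s, (pd s (fun y => T y (Sum.inl i) (Sum.inr j)) z * T z s (Sum.inr k)
            + pd s (fun y => T y (Sum.inr k) (Sum.inl i)) z * T z s (Sum.inr j)
            + pd s (fun y => T y (Sum.inr j) (Sum.inr k)) z * T z s (Sum.inl i)) = 0 := by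
      intro i j k
      rw [hT, Fintype.sum_sum_type]
      simp only [Matrix.fromBlocks_apply₁₁, Matrix.fromBlocks_apply₁₂,
        Matrix.fromBlocks_apply₂₁, Matrix.fromBlocks_apply₂₂, Matrix.add_apply,
        Matrix.sub_apply, Matrix.smul_apply, Matrix.zero_apply, Matrix.sum_apply,
        pdMat, Matrix.of_apply, smul_eq_mul, hE, Pll, Plr_l, Plr_r, Prl_l, Prl_r,
        Prr_l, Prr_r]
      calc _ = ∑ t, ((pd t (fun y => π y i j) (Xc z) * π (Xc z) t k
              + pd t (fun y => π y k i) (Xc z) * π (Xc z) t j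
              + pd t (fun y => π y j k) (Xc z) * π (Xc z) t i)
            + (c (Yc z) * (if p = k then (1:ℝ) else 0))
              * ((if p = t then (1:ℝ) else 0) * pd t (fun y => π y i j) (Xc z))
            + (c (Yc z) * (if p = j then (1:ℝ) else 0))
              * ((if p = t then (1:ℝ) else 0) * pd t (fun y => π y k i) (Xc z))
            - (c (Yc z) * (if p = i then (1:ℝ) else 0))
              * ((if p = t then (1:ℝ) else 0) * pd t (fun y => π y j k) (Xc z))
            + ((if p = i then (1:ℝ) else 0) * (if p = j then (1:ℝ) else 0))
              * (a t * (∑ u, Yc z u * pd u (fun y => π y t k) (Xc z)))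
            - ((if p = k then (1:ℝ) else 0) * (if p = i then (1:ℝ) else 0))
              * (a t * (∑ u, Yc z u * pd u (fun y => π y t j) (Xc z)))) := by
            rw [← Finset.sum_add_distrib]
            exact Finset.sum_congr rfl fun t _ => by ring
        _ = 0 := by
            rw [split6, hjac (Xc z) i j k, hdp i j, hdp k i, hdp j k, hDc k, hDc j]
            ring
    have hJ3 : ∀ i j k : Fin N,
        ∑ s, (pd s (fun y => T y (Sum.inr i) (Sum.inr j)) z * T z s (Sum.inr k)
            + pd s (fun y => T y (Sum.inr k) (Sum.inr i)) z * T z s (Sum.inr j)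
            + pd s (fun y => T y (Sum.inr j) (Sum.inr k)) z * T z s (Sum.inr i)) = 0 := by
      intro i j k
      rw [hT, Fintype.sum_sum_type]
      simp only [Matrix.fromBlocks_apply₁₁, Matrix.fromBlocks_apply₁₂,
        Matrix.fromBlocks_apply₂₁, Matrix.fromBlocks_apply₂₂, Matrix.add_apply,
        Matrix.sub_apply, Matrix.smul_apply, Matrix.zero_apply, Matrix.sum_apply,
        pdMat, Matrix.of_apply, smul_eq_mul, hE, Pll, Plr_l, Plr_r, Prl_l, Prl_r,
        Prr_l, Prr_r]
      calc _ = ∑ t, ∑ u,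
          (Yc z u * (pd t (fun x => pd u (fun y => π y i j) x) (Xc z) * π (Xc z) t k
              + pd t (fun y => π y i j) (Xc z) * pd u (fun y => π y t k) (Xc z)
              + pd t (fun x => pd u (fun y => π y k i) x) (Xc z) * π (Xc z) t j
              + pd t (fun y => π y k i) (Xc z) * pd u (fun y => π y t j) (Xc z)
              + pd t (fun x => pd u (fun y => π y j k) x) (Xc z) * π (Xc z) t i
              + pd t (fun y => π y j k) (Xc z) * pd u (fun y => π y t i) (Xc z))
            + (c (Yc z) * (if p = k then (1:ℝ) else 0))
              * ((if p = t then (1:ℝ) else 0)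
                * (Yc z u * pd t (fun x => pd u (fun y => π y i j) x) (Xc z)))
            + (c (Yc z) * (if p = j then (1:ℝ) else 0))
              * ((if p = t then (1:ℝ) else 0)
                * (Yc z u * pd t (fun x => pd u (fun y => π y k i) x) (Xc z)))
            + (c (Yc z) * (if p = i then (1:ℝ) else 0))
              * ((if p = t then (1:ℝ) else 0)
                * (Yc z u * pd t (fun x => pd u (fun y => π y j k) x) (Xc z)))) := by
            rw [← Finset.sum_add_distrib]
            refine Finset.sum_congr rfl fun t _ => ?_
            simp only [Finset.sum_mul, Finset.mul_sum, ← Finset.sum_add_distrib]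
            exact Finset.sum_congr rfl fun u _ => by ring
        _ = ∑ u, ∑ t,
          (Yc z u * (pd t (fun x => pd u (fun y => π y i j) x) (Xc z) * π (Xc z) t k
              + pd t (fun y => π y i j) (Xc z) * pd u (fun y => π y t k) (Xc z)
              + pd t (fun x => pd u (fun y => π y k i) x) (Xc z) * π (Xc z) t j
              + pd t (fun y => π y k i) (Xc z) * pd u (fun y => π y t j) (Xc z)
              + pd t (fun x => pd u (fun y => π y j k) x) (Xc z) * π (Xc z) t i
              + pd t (fun y => π y j k) (Xc z) * pd u (fun y => π y t i) (Xc z))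
            + (c (Yc z) * (if p = k then (1:ℝ) else 0))
              * ((if p = t then (1:ℝ) else 0)
                * (Yc z u * pd t (fun x => pd u (fun y => π y i j) x) (Xc z)))
            + (c (Yc z) * (if p = j then (1:ℝ) else 0))
              * ((if p = t then (1:ℝ) else 0)
                * (Yc z u * pd t (fun x => pd u (fun y => π y k i) x) (Xc z)))
            + (c (Yc z) * (if p = i then (1:ℝ) else 0))
              * ((if p = t then (1:ℝ) else 0)
                * (Yc z u * pd t (fun x => pd u (fun y => π y j k) x) (Xc z)))) :=
          Finset.sum_comm
        _ = 0 := by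
            refine Finset.sum_eq_zero fun u _ => ?_
            rw [split4, ← Finset.mul_sum, hdjac (Xc z) u i j k, hcol, hcol, hcol]
            simp only [hpp]
            ring
    rcases i' with i|i <;> rcases j' with j|j <;> rcases k' with k|k
    · exact hJ0 i j k
    · exact hJ1 i j k
    · rw [rot, rot]; exact hJ1 k i j
    · exact hJ2 i j k
    · rw [rot]; exact hJ1 j k i
    · rw [rot]; exact hJ2 j k i
    · rw [rot, rot]; exact hJ2 k i j
    · exact hJ3 i j k
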